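/- With the hypotheses of the previous statement, if the map X ↦ tr_s(V₁ X V₂†) has an eigenvalue of modulus exactly 1, then there exist φ ∈ ℝ and a unitary W : H_M → H_M such that V₂ = e^{−iφ} (1_s ⊗ W†) V₁ W. -/

import Mathlib

open Matrix
open scoped ComplexOrder Kronecker

/-- Partial trace over the spin (first) tensor factor. -/
noncomputable def ptraceS {s m : Type*} [Fintype s]
    (M : Matrix (s × m) (s × m) ℂ) : Matrix m m ℂ :=
  fun a b => ∑ k : s, M (k, a) (k, b)


section helpers
variable {s m : Type*} [Fintype s] [Fintype m] [DecidableEq s] [DecidableEq m]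
set_option linter.unusedSectionVars false

private lemma collapse (f : s → s → m → ℂ) :
    (∑ k : s, ∑ j : s, ∑ c : m, if k = j then f k j c else 0) = ∑ k : s, ∑ c : m, f k k c := by
  refine Finset.sum_congr rfl fun k _ => ?_
  rw [Finset.sum_comm]
  simp

lemma ptraceS_kron_mul_left (P : Matrix m m ℂ) (M : Matrix (s × m) (s × m) ℂ) :
    ptraceS (((1 : Matrix s s ℂ) ⊗ₖ P) * M) = P * ptraceS M := by
  ext a b
  simp only [ptraceS, mul_apply, Fintype.sum_prod_type, kroneckerMap_apply, one_apply,
    ite_mul, mul_ite, zero_mul, mul_zero, one_mul, mul_one]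
  rw [collapse (f := fun k j c => P a c * M (j, c) (k, b))]
  rw [Finset.sum_comm]
  simp [Finset.mul_sum]


lemma ptraceS_mul_kron_right (Q : Matrix m m ℂ) (M : Matrix (s × m) (s × m) ℂ) :
    ptraceS (M * ((1 : Matrix s s ℂ) ⊗ₖ Q)) = ptraceS M * Q := by
  ext a b
  simp only [ptraceS, mul_apply, Fintype.sum_prod_type, kroneckerMap_apply, one_apply,
    ite_mul, mul_ite, zero_mul, mul_zero, one_mul, mul_one]
  have h : (∑ k : s, ∑ j : s, ∑ c : m, if j = k then M (k, a) (j, c) * Q c b else 0)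
      = ∑ k : s, ∑ c : m, M (k, a) (k, c) * Q c b := by
    refine Finset.sum_congr rfl fun k _ => ?_
    rw [Finset.sum_comm]
    simp
  rw [h]
  rw [Finset.sum_comm]
  simp [Finset.sum_mul]

lemma ptraceS_add (M N : Matrix (s × m) (s × m) ℂ) :
    ptraceS (M + N) = ptraceS M + ptraceS N := by
  ext a b; simp [ptraceS, Finset.sum_add_distrib]

lemma ptraceS_smul (c : ℂ) (M : Matrix (s × m) (s × m) ℂ) :
    ptraceS (c • M) = c • ptraceS M := by
  ext a b; simp [ptraceS, Finset.mul_sum]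

lemma trace_kron_mul (G : Matrix m m ℂ) (N : Matrix (s × m) (s × m) ℂ) :
    (((1 : Matrix s s ℂ) ⊗ₖ G) * N).trace = (G * ptraceS N).trace := by
  simp only [trace, diag, mul_apply, ptraceS, Fintype.sum_prod_type, kroneckerMap_apply,
    one_apply, ite_mul, mul_ite, zero_mul, mul_zero, one_mul, mul_one]
  have h1 : (∑ k : s, ∑ a : m, ∑ j : s, ∑ c : m, if k = j then G a c * N (j, c) (k, a) else 0)
      = ∑ k : s, ∑ a : m, ∑ c : m, G a c * N (k, c) (k, a) := by
    refine Finset.sum_congr rfl fun k _ => Finset.sum_congr rfl fun a _ => ?_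
    rw [Finset.sum_comm]
    simp
  rw [h1, Finset.sum_comm]
  refine Finset.sum_congr rfl fun a _ => ?_
  rw [Finset.sum_comm]
  simp [Finset.mul_sum]

lemma kron_conjT (A : Matrix s s ℂ) (B : Matrix m m ℂ) : (A ⊗ₖ B)ᴴ = Aᴴ ⊗ₖ Bᴴ := by
  ext ⟨i, j⟩ ⟨k, l⟩
  simp [conjTranspose_apply, kroneckerMap_apply]

private def vecM (M : Matrix m m ℂ) : (m × m) → ℂ := fun p => M p.1 p.2

private lemma trace_dot (M₁ M₂ : Matrix m m ℂ) :
    (M₁ᴴ * M₂).trace = star (vecM M₁) ⬝ᵥ vecM M₂ := by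
  simp only [trace, diag, mul_apply, conjTranspose_apply, dotProduct, Fintype.sum_prod_type,
    vecM, Pi.star_apply]
  exact (Finset.sum_comm)

private lemma single_dot (u : (m × m) → ℂ) (p : m × m) :
    star (Pi.single p (1 : ℂ)) ⬝ᵥ u = u p := by
  simp [dotProduct, Pi.single_apply, apply_ite]

lemma dual_fixed_scalar [Nonempty m] (V₁ : Matrix (s × m) m ℂ) (σ₁ : Matrix m m ℂ)
    (hV₁ : V₁ᴴ * V₁ = 1) (hσ₁ : σ₁ ≠ 0)
    (hfix₁ : ptraceS (V₁ * σ₁ * V₁ᴴ) = σ₁)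
    (hper : ∀ X' : Matrix m m ℂ, X' ≠ 0 → ptraceS (V₁ * X' * V₁ᴴ) = X' → ∃ z : ℂ, X' = z • σ₁)
    (A : Matrix m m ℂ) (hA : V₁ᴴ * (((1 : Matrix s s ℂ) ⊗ₖ A) * V₁) = A) :
    ∃ t : ℂ, A = t • 1 := by
  classical
  set Φ : Matrix m m ℂ → Matrix m m ℂ := fun M => ptraceS (V₁ * M * V₁ᴴ) with hΦdef
  have hΦadd : ∀ M N : Matrix m m ℂ, Φ (M + N) = Φ M + Φ N := by
    intro M N
    simp only [hΦdef, Matrix.mul_add, Matrix.add_mul, ptraceS_add]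
  have hΦsmul : ∀ (c : ℂ) (M : Matrix m m ℂ), Φ (c • M) = c • Φ M := by
    intro c M
    simp only [hΦdef, Matrix.mul_smul, Matrix.smul_mul, ptraceS_smul]
  set Tl : ((m × m) → ℂ) →ₗ[ℂ] ((m × m) → ℂ) :=
    { toFun := fun f => (fun p => Φ (Matrix.of fun a b => f (a, b)) p.1 p.2 - f p)
      map_add' := by
        intro f g
        funext p
        have h1 : (Matrix.of fun a b => (f + g) (a, b))
            = (Matrix.of fun a b => f (a, b)) + (Matrix.of fun a b => g (a, b)) := rfl
        show Φ (Matrix.of fun a b => (f + g) (a, b)) p.1 p.2 - (f + g) p = _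
        rw [h1, hΦadd]
        simp only [Matrix.add_apply, Pi.add_apply]
        ring
      map_smul' := by
        intro c f
        funext p
        have h1 : (Matrix.of fun a b => (c • f) (a, b))
            = c • (Matrix.of fun a b => f (a, b)) := rfl
        show Φ (Matrix.of fun a b => (c • f) (a, b)) p.1 p.2 - (c • f) p = _
        rw [h1, hΦsmul]
        simp only [Matrix.smul_apply, Pi.smul_apply, smul_eq_mul, RingHom.id_apply]
        ring } with hTldef
  set 𝕋 : Matrix (m × m) (m × m) ℂ := LinearMap.toMatrix' Tl with h𝕋def
  have h𝕋 : ∀ f, 𝕋 *ᵥ f = Tl f := fun f => by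
    rw [h𝕋def, ← Matrix.toLin'_apply, Matrix.toLin'_toMatrix']
  set S : Matrix m m ℂ → Matrix m m ℂ := fun W => V₁ᴴ * (((1 : Matrix s s ℂ) ⊗ₖ W) * V₁) - W
    with hSdef
  have keypair : ∀ W X' : Matrix m m ℂ,
      ((S W)ᴴ * X').trace = (Wᴴ * (Φ X' - X')).trace := by
    intro W X'
    have h1 : ((V₁ᴴ * (((1 : Matrix s s ℂ) ⊗ₖ W) * V₁))ᴴ * X').trace
        = (Wᴴ * Φ X').trace := by
      have hmat : (V₁ᴴ * (((1 : Matrix s s ℂ) ⊗ₖ W) * V₁))ᴴ * X'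
          = V₁ᴴ * (((1 : Matrix s s ℂ) ⊗ₖ Wᴴ) * (V₁ * X')) := by
        rw [conjTranspose_mul, conjTranspose_mul, kron_conjT, conjTranspose_one,
          conjTranspose_conjTranspose]
        simp only [Matrix.mul_assoc]
      rw [hmat, trace_mul_comm, Matrix.mul_assoc, trace_kron_mul]
    simp only [hSdef, conjTranspose_sub, Matrix.sub_mul, Matrix.mul_sub, trace_sub, h1]
  have adjvec : ∀ W : Matrix m m ℂ, 𝕋ᴴ *ᵥ vecM W = vecM (S W) := by
    intro W
    funext p
    have e1 : (𝕋ᴴ *ᵥ vecM W) p = star (Pi.single p (1 : ℂ)) ⬝ᵥ (𝕋ᴴ *ᵥ vecM W) :=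
      (single_dot _ p).symm
    set Xm : Matrix m m ℂ := Matrix.of (fun a b => (Pi.single p (1 : ℂ) : (m × m) → ℂ) (a, b)) with hXm
    have hvecX : vecM Xm = Pi.single p (1 : ℂ) := rfl
    have e2 : star (Pi.single p (1 : ℂ)) ⬝ᵥ (𝕋ᴴ *ᵥ vecM W)
        = star (𝕋 *ᵥ Pi.single p (1 : ℂ)) ⬝ᵥ vecM W := by
      rw [Matrix.dotProduct_mulVec, ← Matrix.star_mulVec]
    have e3 : 𝕋 *ᵥ Pi.single p (1 : ℂ) = vecM (Φ Xm - Xm) := by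
      rw [← hvecX, h𝕋]
      funext q
      simp only [hTldef, LinearMap.coe_mk, AddHom.coe_mk]
      show Φ (Matrix.of fun a b => vecM Xm (a, b)) q.1 q.2 - vecM Xm q = vecM (Φ Xm - Xm) q
      have : (Matrix.of fun a b => vecM Xm (a, b)) = Xm := rfl
      rw [this]
      rfl
    have e4 : star (vecM (Φ Xm - Xm)) ⬝ᵥ vecM W = ((Φ Xm - Xm)ᴴ * W).trace :=
      (trace_dot _ _).symm
    have e5 : ((Φ Xm - Xm)ᴴ * W).trace = star ((Wᴴ * (Φ Xm - Xm)).trace) := by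
      rw [← trace_conjTranspose, conjTranspose_mul, conjTranspose_conjTranspose]
    have e6 : star ((Wᴴ * (Φ Xm - Xm)).trace) = star (((S W)ᴴ * Xm).trace) := by
      rw [keypair]
    have e7 : star (((S W)ᴴ * Xm).trace) = star (vecM Xm) ⬝ᵥ vecM (S W) := by
      rw [trace_dot, (Matrix.star_dotProduct (vecM Xm) (vecM (S W))).symm]
    rw [e1, e2, e3, e4, e5, e6, e7, hvecX, single_dot]
  -- kernel dimension argument
  set L : ((m × m) → ℂ) →ₗ[ℂ] ((m × m) → ℂ) := Matrix.mulVecLin 𝕋 with hLdef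
  set L' : ((m × m) → ℂ) →ₗ[ℂ] ((m × m) → ℂ) := Matrix.mulVecLin 𝕋ᴴ with hL'def
  have hkL : LinearMap.ker L = Submodule.span ℂ {vecM σ₁} := by
    apply le_antisymm
    · intro f hf
      have h0 : Tl f = 0 := by
        rw [← h𝕋]
        exact hf
      set M : Matrix m m ℂ := Matrix.of (fun a b => f (a, b)) with hMdef
      have hfM : f = vecM M := funext fun p => rfl
      have hΦM : ptraceS (V₁ * M * V₁ᴴ) = M := by
        ext a b
        have h2 := congrFun h0 (a, b)
        show Φ M a b = M a b
        have h3 : Φ (Matrix.of fun a' b' => f (a', b')) a b - f (a, b) = 0 := h2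
        have h4 : M a b = f (a, b) := rfl
        rw [← hMdef] at h3
        rw [h4]
        exact sub_eq_zero.mp h3
      by_cases hM : M = 0
      · have : f = 0 := by rw [hfM, hM]; rfl
        rw [this]
        exact Submodule.zero_mem _
      · obtain ⟨z, hz⟩ := hper M hM hΦM
        have : f = z • vecM σ₁ := by
          rw [hfM, hz]; rfl
        rw [this]
        exact Submodule.smul_mem _ _ (Submodule.mem_span_singleton_self _)
    · rw [Submodule.span_le, Set.singleton_subset_iff]
      have : L (vecM σ₁) = 0 := by
        show 𝕋 *ᵥ vecM σ₁ = 0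
        rw [h𝕋]
        funext p
        show Φ (Matrix.of fun a b => vecM σ₁ (a, b)) p.1 p.2 - vecM σ₁ p = 0
        have h5 : (Matrix.of fun a b => vecM σ₁ (a, b)) = σ₁ := rfl
        rw [h5]
        show ptraceS (V₁ * σ₁ * V₁ᴴ) p.1 p.2 - σ₁ p.1 p.2 = 0
        rw [hfix₁]
        ring
      exact LinearMap.mem_ker.2 this
  have hσv : vecM σ₁ ≠ 0 := by
    intro h
    exact hσ₁ (by ext a b; exact congrFun h (a, b))
  have hdim1 : Module.finrank ℂ (LinearMap.ker L) = 1 := by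
    rw [hkL]; exact finrank_span_singleton hσv
  have h1 := LinearMap.finrank_range_add_finrank_ker L
  have h2 := LinearMap.finrank_range_add_finrank_ker L'
  have e1 : Module.finrank ℂ (LinearMap.range L) = 𝕋.rank := rfl
  have e2 : Module.finrank ℂ (LinearMap.range L') = 𝕋ᴴ.rank := rfl
  have e3 : 𝕋ᴴ.rank = 𝕋.rank := Matrix.rank_conjTranspose 𝕋
  have hdim2 : Module.finrank ℂ (LinearMap.ker L') = 1 := by
    rw [e1] at h1; rw [e2, e3] at h2
    omega
  have hmem1 : vecM (1 : Matrix m m ℂ) ∈ LinearMap.ker L' := by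
    apply LinearMap.mem_ker.2
    show 𝕋ᴴ *ᵥ vecM (1 : Matrix m m ℂ) = 0
    rw [adjvec]
    have : S (1 : Matrix m m ℂ) = 0 := by
      simp only [hSdef, Matrix.one_kronecker_one, Matrix.one_mul, hV₁]
      exact sub_self _
    rw [this]
    rfl
  have hv1ne : vecM (1 : Matrix m m ℂ) ≠ 0 := by
    intro h
    have m₀ : m := Classical.arbitrary m
    have := congrFun h (m₀, m₀)
    simp [vecM, Matrix.one_apply] at this
  have hspan : Submodule.span ℂ {vecM (1 : Matrix m m ℂ)} = LinearMap.ker L' := by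
    apply Submodule.eq_of_le_of_finrank_le
    · rw [Submodule.span_le, Set.singleton_subset_iff]; exact hmem1
    · rw [hdim2, finrank_span_singleton hv1ne]
  have hmemA : vecM A ∈ LinearMap.ker L' := by
    apply LinearMap.mem_ker.2
    show 𝕋ᴴ *ᵥ vecM A = 0
    rw [adjvec]
    have : S A = 0 := by
      simp only [hSdef, hA]
      exact sub_self _
    rw [this]
    rfl
  rw [← hspan] at hmemA
  obtain ⟨t, ht⟩ := Submodule.mem_span_singleton.1 hmemA
  refine ⟨t, ?_⟩
  ext a b
  have h6 := congrFun ht (a, b)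
  simp only [Pi.smul_apply, smul_eq_mul] at h6
  show A a b = (t • (1 : Matrix m m ℂ)) a b
  rw [Matrix.smul_apply, smul_eq_mul]
  exact h6.symm.trans rfl


section cs
variable {n k : Type*} [Fintype n] [Fintype k]


lemma trace_CTmul_self_eq_zero {C : Matrix n k ℂ} (h : (Cᴴ * C).trace = 0) : C = 0 := by
  have h2 : ∑ j : k, ∑ i : n, Complex.normSq (C i j) = 0 := by
    have h1 := congrArg Complex.re h
    simpa [trace, diag, Matrix.mul_apply, conjTranspose_apply, Complex.star_def,
      mul_comm, Complex.mul_conj, Complex.ofReal_sum] using h1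
  have h3 : ∀ j ∈ Finset.univ, ∀ i ∈ (Finset.univ : Finset n), Complex.normSq (C i j) = 0 := by
    have := (Finset.sum_eq_zero_iff_of_nonneg (fun j _ =>
      Finset.sum_nonneg fun i _ => Complex.normSq_nonneg _)).1 h2
    intro j hj
    exact (Finset.sum_eq_zero_iff_of_nonneg (fun i _ => Complex.normSq_nonneg _)).1 (this j hj)
  ext i j
  exact Complex.normSq_eq_zero.1 (h3 j (Finset.mem_univ _) i (Finset.mem_univ _))

lemma cs_eq (u v : Matrix n k ℂ) (τ ν : ℂ)
    (hτ : star τ = τ) (hν : star ν * ν = 1)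
    (huu : (uᴴ * u).trace = τ) (hvv : (vᴴ * v).trace = τ)
    (huv : (uᴴ * v).trace = ν * τ) : v = ν • u := by
  have hvu : (vᴴ * u).trace = star ν * τ := by
    have h1 : (vᴴ * u)ᴴ = uᴴ * v := by
      rw [conjTranspose_mul, conjTranspose_conjTranspose]
    have h2 := trace_conjTranspose (vᴴ * u)
    rw [h1, huv] at h2
    have h3 := congrArg star h2
    rw [star_star, star_mul', hτ] at h3
    exact h3.symm
  have key : ((v - ν • u)ᴴ * (v - ν • u)).trace = 0 := by
    simp only [conjTranspose_sub, conjTranspose_smul, Matrix.sub_mul, Matrix.mul_sub,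
      Matrix.smul_mul, Matrix.mul_smul, trace_sub, trace_smul, smul_smul, smul_eq_mul,
      huu, hvv, huv, hvu]
    linear_combination (- τ) * hν
  exact sub_eq_zero.mp (trace_CTmul_self_eq_zero key)


lemma trace_CTmul_self_eq_zero_dup {C : Matrix n k ℂ} (h : (Cᴴ * C).trace = 0) : C = 0 := by
  have h2 : ∑ j : k, ∑ i : n, Complex.normSq (C i j) = 0 := by
    have h1 := congrArg Complex.re h
    simpa [trace, diag, Matrix.mul_apply, conjTranspose_apply, Complex.star_def,
      mul_comm, Complex.mul_conj, Complex.ofReal_sum] using h1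
  have h3 : ∀ j ∈ Finset.univ, ∀ i ∈ (Finset.univ : Finset n), Complex.normSq (C i j) = 0 := by
    have := (Finset.sum_eq_zero_iff_of_nonneg (fun j _ =>
      Finset.sum_nonneg fun i _ => Complex.normSq_nonneg _)).1 h2
    intro j hj
    exact (Finset.sum_eq_zero_iff_of_nonneg (fun i _ => Complex.normSq_nonneg _)).1 (this j hj)
  ext i j
  exact Complex.normSq_eq_zero.1 (h3 j (Finset.mem_univ _) i (Finset.mem_univ _))

lemma entry_dotProduct {P : Matrix n n ℂ} (X : Matrix n k ℂ) (j : k) :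
    (Xᴴ * P * X) j j = dotProduct (star (fun a => X a j)) (P *ᵥ (fun a => X a j)) := by
  simp only [Matrix.mul_apply, conjTranspose_apply, dotProduct, mulVec, Pi.star_apply,
    Finset.sum_mul, Finset.mul_sum]
  rw [Finset.sum_comm]
  refine Finset.sum_congr rfl fun a _ => Finset.sum_congr rfl fun b _ => by ring

lemma conj_posDef_ne_zero {P : Matrix n n ℂ} (hP : P.PosDef) {X : Matrix n k ℂ} (hX : X ≠ 0) :
    Xᴴ * P * X ≠ 0 := by
  intro h0
  apply hX
  ext a j
  by_contra hc
  have hcol : (fun a => X a j) ≠ 0 := by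
    intro hz; exact hc (by simpa using congrFun hz a)
  have := hP.dotProduct_mulVec_pos hcol
  rw [← entry_dotProduct X j, h0] at this
  simp at this

end cs
end helpers

/-- If `V₁, V₂ : H_M → H_s ⊗ H_M` are isometries whose induced channels have unique
full-rank fixed points and trivial peripheral spectrum otherwise, and the map
`X ↦ tr_s(V₁ X V₂ᴴ)` has an eigenvalue of modulus exactly 1, then there exist `φ ∈ ℝ`
and a unitary `W` on `H_M` such that `V₂ = e^{−iφ} (1_s ⊗ Wᴴ) V₁ W`. -/
theorem cross_transfer_peripheral_eigenvalue_implies_equiv {s m : Type*}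
    [Fintype s] [Fintype m] [DecidableEq s] [DecidableEq m]
    (V₁ V₂ : Matrix (s × m) m ℂ) (σ₁ σ₂ : Matrix m m ℂ)
    (hV₁ : V₁ᴴ * V₁ = 1) (hV₂ : V₂ᴴ * V₂ = 1)
    (hσ₁ : σ₁.PosDef) (hσ₂ : σ₂.PosDef)
    (hfix₁ : ptraceS (V₁ * σ₁ * V₁ᴴ) = σ₁)
    (hfix₂ : ptraceS (V₂ * σ₂ * V₂ᴴ) = σ₂)
    (hper₁ : ∀ (X : Matrix m m ℂ) (c : ℂ), X ≠ 0 → ‖c‖ = 1 →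
      ptraceS (V₁ * X * V₁ᴴ) = c • X → c = 1 ∧ ∃ z : ℂ, X = z • σ₁)
    (hper₂ : ∀ (X : Matrix m m ℂ) (c : ℂ), X ≠ 0 → ‖c‖ = 1 →
      ptraceS (V₂ * X * V₂ᴴ) = c • X → c = 1 ∧ ∃ z : ℂ, X = z • σ₂)
    (ν : ℂ) (X : Matrix m m ℂ) (hX : X ≠ 0)
    (heig : ptraceS (V₁ * X * V₂ᴴ) = ν • X)
    (hν : ‖ν‖ = 1) :
    ∃ (φ : ℝ) (W : Matrix m m ℂ), Wᴴ * W = 1 ∧ W * Wᴴ = 1 ∧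
      V₂ = Complex.exp (-(Complex.I * φ)) •
        (((1 : Matrix s s ℂ) ⊗ₖ Wᴴ) * V₁ * W) := by
  classical
  rcases isEmpty_or_nonempty m with hm | hm
  · have : X = 0 := by ext a b; exact (IsEmpty.false a).elim
    exact absurd this hX
  -- scalar facts about ν
  have hνν : star ν * ν = 1 := by
    rw [Complex.star_def, mul_comm, Complex.mul_conj]
    norm_cast
    rw [Complex.normSq_eq_norm_sq, hν]; norm_num
  have hν0 : ν ≠ 0 := by
    intro h; rw [h] at hν; simp at hν
  -- facts about σ₁ and its square root
  have hσ₁inv : (σ₁⁻¹).PosDef := hσ₁.inv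
  have hdet₁ : IsUnit σ₁.det := isUnit_iff_ne_zero.2 hσ₁.det_pos.ne'
  have hσ₁invH : σ₁⁻¹ᴴ = σ₁⁻¹ := hσ₁inv.isHermitian
  obtain ⟨R, hRR, hRH⟩ : ∃ R : Matrix m m ℂ, R * R = σ₁ ∧ Rᴴ = R := by
    open scoped MatrixOrder in
    exact ⟨CFC.sqrt σ₁, CFC.sqrt_mul_sqrt_self σ₁ hσ₁.posSemidef.nonneg,
      (CFC.sqrt_nonneg σ₁).posSemidef.1⟩
  have hdetR : IsUnit R.det := by
    refine isUnit_iff_ne_zero.2 fun h => ?_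
    have : σ₁.det = 0 := by rw [← hRR, det_mul, h, mul_zero]
    exact hσ₁.det_pos.ne' this
  have hRRinv : R * R⁻¹ = 1 := mul_nonsing_inv R hdetR
  have hRinvR : R⁻¹ * R = 1 := nonsing_inv_mul R hdetR
  have hσinv : σ₁⁻¹ = R⁻¹ * R⁻¹ := by rw [← hRR, Matrix.mul_inv_rev]
  have hσσinv : σ₁ * σ₁⁻¹ = 1 := mul_nonsing_inv σ₁ hdet₁
  have hσinvσ : σ₁⁻¹ * σ₁ = 1 := nonsing_inv_mul σ₁ hdet₁
  have hRinvH : R⁻¹ᴴ = R⁻¹ := by rw [conjTranspose_nonsing_inv, hRH]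
  set Y : Matrix m m ℂ := Xᴴ * σ₁⁻¹ with hYdef
  have hYH : Yᴴ = σ₁⁻¹ * X := by
    rw [hYdef, conjTranspose_mul, hσ₁invH, conjTranspose_conjTranspose]
  set τ : ℂ := (X * Xᴴ * σ₁⁻¹).trace with hτdef
  have hτ : star τ = τ := by
    rw [hτdef, ← trace_conjTranspose, conjTranspose_mul, conjTranspose_mul, hσ₁invH,
      conjTranspose_conjTranspose, trace_mul_comm, Matrix.mul_assoc]
  -- Cauchy–Schwarz setup
  have huu : ((V₂ * Xᴴ * R⁻¹)ᴴ * (V₂ * Xᴴ * R⁻¹)).trace = τ := by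
    have h1 : (V₂ * Xᴴ * R⁻¹)ᴴ * (V₂ * Xᴴ * R⁻¹) = R⁻¹ * (X * (Xᴴ * R⁻¹)) := by
      simp only [conjTranspose_mul, hRinvH, conjTranspose_conjTranspose, Matrix.mul_assoc]
      rw [← Matrix.mul_assoc V₂ᴴ V₂, hV₂, Matrix.one_mul]
    rw [h1, trace_mul_comm]
    congr 1
    rw [hσinv]
    simp only [Matrix.mul_assoc]
  have hvv : ((((1 : Matrix s s ℂ) ⊗ₖ Y) * V₁ * R)ᴴ * (((1 : Matrix s s ℂ) ⊗ₖ Y) * V₁ * R)).trace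
      = τ := by
    have h1 : (((1 : Matrix s s ℂ) ⊗ₖ Y) * V₁ * R)ᴴ * (((1 : Matrix s s ℂ) ⊗ₖ Y) * V₁ * R)
        = R * (V₁ᴴ * (((1 : Matrix s s ℂ) ⊗ₖ (Yᴴ * Y)) * (V₁ * R))) := by
      simp only [conjTranspose_mul, kron_conjT, conjTranspose_one, hRH, Matrix.mul_assoc]
      rw [← Matrix.mul_assoc ((1 : Matrix s s ℂ) ⊗ₖ Yᴴ) ((1 : Matrix s s ℂ) ⊗ₖ Y),
        ← Matrix.mul_kronecker_mul, Matrix.one_mul]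
    rw [h1, trace_mul_comm]
    have h2 : V₁ᴴ * (((1 : Matrix s s ℂ) ⊗ₖ (Yᴴ * Y)) * (V₁ * R)) * R
        = V₁ᴴ * (((1 : Matrix s s ℂ) ⊗ₖ (Yᴴ * Y)) * (V₁ * σ₁)) := by
      rw [← hRR]
      simp only [Matrix.mul_assoc]
    rw [h2, trace_mul_comm]
    have h3 : ((1 : Matrix s s ℂ) ⊗ₖ (Yᴴ * Y)) * (V₁ * σ₁) * V₁ᴴ
        = ((1 : Matrix s s ℂ) ⊗ₖ (Yᴴ * Y)) * (V₁ * σ₁ * V₁ᴴ) := by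
      simp only [Matrix.mul_assoc]
    rw [h3, trace_kron_mul, hfix₁]
    -- now : (Yᴴ * Y * σ₁).trace = τ
    rw [hYH, hYdef]
    have h4 : σ₁⁻¹ * X * (Xᴴ * σ₁⁻¹) * σ₁ = σ₁⁻¹ * (X * Xᴴ) * (σ₁⁻¹ * σ₁) := by
      simp only [Matrix.mul_assoc]
    rw [h4, hσinvσ, Matrix.mul_one, trace_mul_comm]
  have huv : ((V₂ * Xᴴ * R⁻¹)ᴴ * (((1 : Matrix s s ℂ) ⊗ₖ Y) * V₁ * R)).trace = ν * τ := by
    have h1 : (V₂ * Xᴴ * R⁻¹)ᴴ * (((1 : Matrix s s ℂ) ⊗ₖ Y) * V₁ * R)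
        = R⁻¹ * (X * (V₂ᴴ * (((1 : Matrix s s ℂ) ⊗ₖ Y) * (V₁ * R)))) := by
      simp only [conjTranspose_mul, hRinvH, conjTranspose_conjTranspose, Matrix.mul_assoc]
    rw [h1, trace_mul_comm]
    have h2 : X * (V₂ᴴ * (((1 : Matrix s s ℂ) ⊗ₖ Y) * (V₁ * R))) * R⁻¹
        = X * V₂ᴴ * ((1 : Matrix s s ℂ) ⊗ₖ Y) * V₁ * (R * R⁻¹) := by
      simp only [Matrix.mul_assoc]
    rw [h2, hRRinv, Matrix.mul_one, trace_mul_comm]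
    have h3 : V₁ * (X * V₂ᴴ * ((1 : Matrix s s ℂ) ⊗ₖ Y))
        = V₁ * X * V₂ᴴ * ((1 : Matrix s s ℂ) ⊗ₖ Y) := by
      simp only [Matrix.mul_assoc]
    rw [h3, trace_mul_comm, trace_kron_mul, heig]
    rw [Matrix.mul_smul, trace_smul, smul_eq_mul]
    congr 1
    rw [hYdef, trace_mul_comm]
    have h5 : X * (Xᴴ * σ₁⁻¹) = X * Xᴴ * σ₁⁻¹ := by simp only [Matrix.mul_assoc]
    rw [h5]
  have hcs := cs_eq (V₂ * Xᴴ * R⁻¹) (((1 : Matrix s s ℂ) ⊗ₖ Y) * V₁ * R) τ ν hτ hνν huu hvv huv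
  -- derive the intertwining relation
  have E1 : ((1 : Matrix s s ℂ) ⊗ₖ Y) * V₁ * σ₁ = ν • (V₂ * Xᴴ) := by
    have := congrArg (fun M => M * R) hcs
    simp only [Matrix.smul_mul] at this
    rw [Matrix.mul_assoc _ R R, hRR] at this
    rw [Matrix.mul_assoc _ R⁻¹ R, hRinvR, Matrix.mul_one] at this
    exact this
  have E2 : ((1 : Matrix s s ℂ) ⊗ₖ Y) * V₁ = ν • (V₂ * Y) := by
    have := congrArg (fun M => M * σ₁⁻¹) E1
    simp only [Matrix.smul_mul] at this
    rw [Matrix.mul_assoc _ σ₁ σ₁⁻¹, hσσinv, Matrix.mul_one, Matrix.mul_assoc] at this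
    rw [this, hYdef]
  -- Z is a fixed point of channel 2
  set Z : Matrix m m ℂ := Xᴴ * σ₁⁻¹ * X with hZdef
  have hYσY : Y * σ₁ * Yᴴ = Z := by
    rw [hYH, hYdef, hZdef]
    have h : Xᴴ * σ₁⁻¹ * σ₁ * (σ₁⁻¹ * X) = Xᴴ * (σ₁⁻¹ * σ₁) * (σ₁⁻¹ * X) := by
      simp only [Matrix.mul_assoc]
    rw [h, hσinvσ, Matrix.mul_one]
    simp only [Matrix.mul_assoc]
  have hV₂Y : V₂ * Y = star ν • (((1 : Matrix s s ℂ) ⊗ₖ Y) * V₁) := by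
    rw [E2, smul_smul, hνν, one_smul]
  have hZfix : ptraceS (V₂ * Z * V₂ᴴ) = Z := by
    have hmat : V₂ * Z * V₂ᴴ
        = ((1 : Matrix s s ℂ) ⊗ₖ Y) * (V₁ * σ₁ * V₁ᴴ) * ((1 : Matrix s s ℂ) ⊗ₖ Yᴴ) := by
      have e1 : V₂ * Z * V₂ᴴ = (V₂ * Y) * σ₁ * (V₂ * Y)ᴴ := by
        rw [conjTranspose_mul, ← hYσY]
        simp only [Matrix.mul_assoc]
      rw [e1, hV₂Y, conjTranspose_smul, conjTranspose_mul, kron_conjT, conjTranspose_one,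
        star_star]
      simp only [Matrix.smul_mul, Matrix.mul_smul, smul_smul]
      rw [mul_comm ν (star ν), hνν, one_smul]
      simp only [Matrix.mul_assoc]
    rw [hmat, ptraceS_mul_kron_right, ptraceS_kron_mul_left, hfix₁, hYσY]
  have hZne : Z ≠ 0 := conj_posDef_ne_zero hσ₁inv hX
  obtain ⟨-, z, hzZ⟩ := hper₂ Z 1 hZne (by simp) (by rw [one_smul]; exact hZfix)
  have hz0 : z ≠ 0 := by
    intro h; rw [h, zero_smul] at hzZ; exact hZne hzZ
  have hdetZ : Z.det ≠ 0 := by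
    rw [hzZ, det_smul]
    exact mul_ne_zero (pow_ne_zero _ hz0) hσ₂.det_pos.ne'
  have hdetX : X.det ≠ 0 := by
    intro h
    apply hdetZ
    rw [hZdef, det_mul, det_mul, h, mul_zero]
  have hdetY : IsUnit Y.det := by
    rw [hYdef, det_mul, det_conjTranspose]
    refine isUnit_iff_ne_zero.2 (mul_ne_zero ?_ hσ₁inv.det_pos.ne')
    simpa using hdetX
  have hYYinv : Y * Y⁻¹ = 1 := mul_nonsing_inv Y hdetY
  have hAfix : V₁ᴴ * ((((1 : Matrix s s ℂ) ⊗ₖ (Yᴴ * Y))) * V₁) = Yᴴ * Y := by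
    have e0 : (((1 : Matrix s s ℂ) ⊗ₖ Y) * V₁)ᴴ * (((1 : Matrix s s ℂ) ⊗ₖ Y) * V₁)
        = V₁ᴴ * ((((1 : Matrix s s ℂ) ⊗ₖ (Yᴴ * Y))) * V₁) := by
      simp only [conjTranspose_mul, kron_conjT, conjTranspose_one, Matrix.mul_assoc]
      rw [← Matrix.mul_assoc ((1 : Matrix s s ℂ) ⊗ₖ Yᴴ) ((1 : Matrix s s ℂ) ⊗ₖ Y),
        ← Matrix.mul_kronecker_mul, Matrix.one_mul]
    rw [← e0, E2, conjTranspose_smul, Matrix.smul_mul, Matrix.mul_smul, smul_smul, hνν,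
      one_smul, conjTranspose_mul]
    have h : Yᴴ * V₂ᴴ * (V₂ * Y) = Yᴴ * (V₂ᴴ * V₂) * Y := by
      simp only [Matrix.mul_assoc]
    rw [h, hV₂, Matrix.mul_one]
  have hσ₁ne : σ₁ ≠ 0 := by
    intro h
    apply hσ₁.det_pos.ne'
    rw [h]
    exact det_zero
  have hper' : ∀ X' : Matrix m m ℂ, X' ≠ 0 → ptraceS (V₁ * X' * V₁ᴴ) = X' →
      ∃ z : ℂ, X' = z • σ₁ := fun X' h1 h2 =>
    (hper₁ X' 1 h1 (by simp) (by rw [one_smul]; exact h2)).2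
  obtain ⟨t, hAt⟩ := dual_fixed_scalar V₁ σ₁ hV₁ hσ₁ne hfix₁ hper' (Yᴴ * Y) hAfix
  -- t is a positive real
  obtain ⟨m₀⟩ := hm
  set x : m → ℂ := Pi.single m₀ 1 with hxdef
  have hx0 : x ≠ 0 := by
    intro h
    have := congrFun h m₀
    simp [hxdef] at this
  have hxx : star x ⬝ᵥ x = 1 := by
    simp [hxdef, dotProduct, Pi.single_apply, apply_ite]
  have hYx : Y *ᵥ x ≠ 0 := by
    intro h
    have hinj : Function.Injective (Y.mulVec) :=
      mulVec_injective_iff_isUnit.2 ((isUnit_iff_isUnit_det Y).2 hdetY)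
    exact hx0 (hinj (by rw [h, mulVec_zero]))
  have ht : star x ⬝ᵥ ((Yᴴ * Y) *ᵥ x) = t := by
    rw [hAt, smul_mulVec, one_mulVec, dotProduct_smul, hxx, smul_eq_mul, mul_one]
  have htpos : (0 : ℂ) < t := by
    rw [← ht, ← mulVec_mulVec, dotProduct_mulVec, ← star_mulVec]
    exact dotProduct_star_self_pos_iff.2 hYx
  have htre : 0 < t.re := by
    have := Complex.lt_def.1 htpos
    simpa using this.1
  have htim : t.im = 0 := by
    have := Complex.lt_def.1 htpos
    simpa using this.2.symm
  set c : ℝ := Real.sqrt t.re with hcdef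
  have hcR : 0 < c := Real.sqrt_pos.2 htre
  have hc0 : (c : ℂ) ≠ 0 := by
    exact_mod_cast hcR.ne'
  have hcc : (c : ℂ) * (c : ℂ) = t := by
    rw [← Complex.ofReal_mul, hcdef, Real.mul_self_sqrt htre.le]
    exact Complex.ext (by simp) (by simp [htim])
  have ht0 : t ≠ 0 := by
    rw [← hcc]; exact mul_ne_zero hc0 hc0
  have hYYH : Y * Yᴴ = t • 1 := by
    have e1 : Y * (Yᴴ * Y) * Y⁻¹ = Y * Yᴴ := by
      have h : Y * (Yᴴ * Y) * Y⁻¹ = Y * Yᴴ * (Y * Y⁻¹) := by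
        simp only [Matrix.mul_assoc]
      rw [h, hYYinv, Matrix.mul_one]
    rw [← e1, hAt, Matrix.mul_smul, Matrix.mul_one, Matrix.smul_mul, hYYinv]
  -- assemble
  have hstarc : star ((c : ℂ)⁻¹) = (c : ℂ)⁻¹ := by
    rw [star_inv₀, Complex.star_def, Complex.conj_ofReal]
  have hUHU : ((c : ℂ)⁻¹ • Y)ᴴ * ((c : ℂ)⁻¹ • Y) = 1 := by
    rw [conjTranspose_smul, hstarc, Matrix.smul_mul, Matrix.mul_smul, smul_smul, hAt,
      smul_smul]
    have h : (c : ℂ)⁻¹ * (c : ℂ)⁻¹ * t = 1 := by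
      rw [← hcc]
      field_simp
    rw [h, one_smul]
  have hUUH : ((c : ℂ)⁻¹ • Y) * ((c : ℂ)⁻¹ • Y)ᴴ = 1 := mul_eq_one_comm.mp hUHU
  refine ⟨ν.arg, ((c : ℂ)⁻¹ • Y)ᴴ, ?_, ?_, ?_⟩
  · simp only [conjTranspose_conjTranspose]
    exact hUUH
  · simp only [conjTranspose_conjTranspose]
    exact hUHU
  · have hexp : Complex.exp (-(Complex.I * (ν.arg : ℂ))) = star ν := by
      have h1 : Complex.exp ((ν.arg : ℂ) * Complex.I) = ν := by
        have h2 := Complex.norm_mul_exp_arg_mul_I ν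
        rw [hν] at h2
        simpa using h2
      rw [mul_comm, Complex.exp_neg, h1]
      exact inv_eq_of_mul_eq_one_left hνν
    rw [hexp, conjTranspose_conjTranspose]
    have hfin : ((1 : Matrix s s ℂ) ⊗ₖ Y) * V₁ * Yᴴ = (ν * t) • V₂ := by
      rw [E2, Matrix.smul_mul, Matrix.mul_assoc, hYYH, Matrix.mul_smul, Matrix.mul_one,
        smul_smul]
    rw [conjTranspose_smul, hstarc, Matrix.kronecker_smul, Matrix.smul_mul, Matrix.smul_mul,
      Matrix.mul_smul, hfin]
    simp only [smul_smul]
    have hsc : star ν * ((c : ℂ)⁻¹ * ((c : ℂ)⁻¹ * (ν * t))) = 1 := by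
      have h : star ν * ((c : ℂ)⁻¹ * ((c : ℂ)⁻¹ * (ν * t)))
          = (star ν * ν) * (((c : ℂ) * (c : ℂ))⁻¹ * t) := by
        rw [mul_inv]
        ring
      rw [h, hνν, hcc, one_mul, inv_mul_cancel₀ ht0]
    rw [hsc, one_smul]
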